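/- Every function σ ∈ C^{d+1}(ℝ^d) all of whose derivatives up to order d+1 are bounded belongs to the modulation space M^{∞,1}(ℝ^d), and hence to the Wiener amalgam space W(FL^1, ℓ^∞)(ℝ^d). -/

import Mathlib

open MeasureTheory Real Complex SchwartzMap
open scoped FourierTransform ENNReal NNReal

noncomputable section

/-- Euclidean space ℝ^d. -/
abbrev Ed (d : ℕ) := EuclideanSpace ℝ (Fin d)

/-- Japanese bracket ⟨x⟩ = (1+|x|²)^{1/2}. -/
def jb {d : ℕ} (x : Ed d) : ℝ := Real.sqrt (1 + ‖x‖ ^ 2)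

/-- Gaussian window. -/
def gaussW (d : ℕ) : Ed d → ℂ := fun x => Complex.exp (-(π * ‖x‖ ^ 2 : ℝ))

/-- Short-time Fourier transform with window g: V_g f (x, ω) = ⟨f, M_ω T_x g⟩. -/
def stft {d : ℕ} (g f : Ed d → ℂ) (x ω : Ed d) : ℂ :=
  ∫ t : Ed d, f t * (starRingEnd ℂ) (g (t - x)) *
    Complex.exp ((-2 * π * (inner ℝ ω t : ℝ) : ℝ) * Complex.I)

/-- Quasi-norm of the weighted modulation space M^{p,q}_{0,s}(ℝ^d) (Gaussian window). -/
def modNorm (d : ℕ) (p q : ℝ≥0∞) (s : ℝ) (f : Ed d → ℂ) : ℝ≥0∞ :=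
  eLpNorm (fun ω : Ed d =>
    (eLpNorm (fun x : Ed d => stft (gaussW d) f x ω) p volume).toReal * jb ω ^ s) q volume

/-- Fourier multiplier operator H_σ f = 𝓕⁻¹(σ · 𝓕 f). -/
def fm {d : ℕ} (σ : Ed d → ℂ) (f : Ed d → ℂ) : Ed d → ℂ :=
  𝓕⁻ (fun ξ => σ ξ * 𝓕 f ξ)

/-- Wiener amalgam W(𝓕L^p, ℓ^∞) quasi-norm w.r.t. window χ and lattice βℤ^d:
sup over n ∈ ℤ^d of ‖𝓕⁻¹(σ · T_{βn}χ)‖_{L^p}. -/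
def wienerNorm (d : ℕ) (p : ℝ≥0∞) (β : ℝ) (χ σ : Ed d → ℂ) : ℝ≥0∞ :=
  ⨆ n : Fin d → ℤ,
    eLpNorm (𝓕⁻ (fun ξ : Ed d =>
      σ ξ * χ (ξ - (show Ed d from WithLp.toLp 2 fun i => β * (n i : ℝ))))) p volume

end


noncomputable section
namespace Stmt8
variable {d : ℕ}

lemma norm_comp_sub (v : Ed d) : ∀ (n : ℕ) {F : Type} [NormedAddCommGroup F] [NormedSpace ℝ F]
    (ψ : Ed d → F), ContDiff ℝ ((⊤ : ℕ∞) : WithTop ℕ∞) ψ → ∀ t : Ed d,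
    ‖iteratedFDeriv ℝ n (fun s => ψ (s - v)) t‖ = ‖iteratedFDeriv ℝ n ψ (t - v)‖ := by
  intro n
  induction n with
  | zero => intro F _ _ ψ hψ t; simp
  | succ n ih =>
    intro F _ _ ψ hψ t
    have hd : fderiv ℝ (fun s => ψ (s - v)) = fun s => fderiv ℝ ψ (s - v) := by
      funext s
      have h1 : HasFDerivAt (fun s : Ed d => s - v) (ContinuousLinearMap.id ℝ (Ed d)) s :=
        (hasFDerivAt_id s).sub_const v
      have h2 := ((hψ.differentiable (by simp) (s - v)).hasFDerivAt).comp s h1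
      simpa [Function.comp_def] using h2.fderiv
    rw [← norm_iteratedFDeriv_fderiv, hd,
      ih (fderiv ℝ ψ) (hψ.fderiv_right (by exact_mod_cast le_top)) t, norm_iteratedFDeriv_fderiv]

lemma clm_bound (L : Ed d →L[ℝ] (Ed d →L[ℝ] ℂ)) (m : ℕ) (x : Ed d) :
    ‖iteratedFDeriv ℝ m (fun y => L y) x‖ ≤ ‖L‖ * (1 + ‖x‖) := by
  match m with
  | 0 =>
    rw [norm_iteratedFDeriv_zero]
    calc ‖L x‖ ≤ ‖L‖ * ‖x‖ := L.le_opNorm x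
    _ ≤ ‖L‖ * (1 + ‖x‖) := by nlinarith [norm_nonneg L, norm_nonneg x]
  | (m+1) =>
    rw [← norm_iteratedFDeriv_fderiv]
    have : fderiv ℝ (fun y : Ed d => L y) = fun _ => (L : Ed d →L[ℝ] (Ed d →L[ℝ] ℂ)) := by
      funext y; exact L.fderiv
    rw [this]
    match m with
    | 0 =>
      rw [norm_iteratedFDeriv_zero]
      nlinarith [norm_nonneg L, norm_nonneg x]
    | (m+1) =>
      rw [iteratedFDeriv_const_of_ne (Nat.succ_ne_zero m)]
      simp only [Pi.zero_apply, norm_zero]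
      positivity

def TT (d : ℕ) : Ed d →L[ℝ] (Ed d →L[ℝ] ℂ) :=
  (ContinuousLinearMap.compL ℝ (Ed d) ℝ ℂ Complex.ofRealCLM).comp
    ((-(2*π) : ℝ) • (innerSL ℝ : Ed d →L[ℝ] Ed d →L[ℝ] ℝ))

lemma gauss_contDiff : ContDiff ℝ ((⊤ : ℕ∞) : WithTop ℕ∞) (gaussW d) := by
  have h1 : ContDiff ℝ ((⊤ : ℕ∞) : WithTop ℕ∞) fun x : Ed d => ((-(π * ‖x‖^2) : ℝ) : ℂ) :=
    Complex.ofRealCLM.contDiff.comp ((contDiff_const.mul (contDiff_norm_sq ℝ)).neg)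
  exact Complex.contDiff_exp.comp (by exact_mod_cast h1)

lemma gauss_fderiv : fderiv ℝ (gaussW d) = fun x => gaussW d x • TT d x := by
  funext x
  have h1 : HasFDerivAt (fun x : Ed d => ‖x‖^2) ((2:ℕ) • innerSL ℝ x) x :=
    (hasStrictFDerivAt_norm_sq x).hasFDerivAt
  have h2 : HasFDerivAt (fun x : Ed d => -(π * ‖x‖^2)) (-(π • ((2:ℕ) • innerSL ℝ x))) x :=
    (h1.const_mul π).neg
  have h3 := (Complex.ofRealCLM.hasFDerivAt).comp x h2
  have h4 := h3.cexp
  have h5 : HasFDerivAt (gaussW d)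
      (Complex.exp (-(π * ‖x‖^2) : ℝ) • (Complex.ofRealCLM.comp (-(π • ((2:ℕ) • innerSL ℝ x))))) x := by
    convert h4 using 2 <;> simp [gaussW] <;> rfl
  rw [h5.fderiv]
  ext y
  simp only [gaussW, TT, ContinuousLinearMap.smul_apply, ContinuousLinearMap.coe_comp',
    Function.comp_apply, ContinuousLinearMap.neg_apply, ContinuousLinearMap.coe_smul',
    Pi.smul_apply, Complex.ofRealCLM_apply, ContinuousLinearMap.compL_apply,
    innerSL_apply_apply, smul_eq_mul, nsmul_eq_mul]
  push_cast
  ring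

lemma norm_gaussW (x : Ed d) : ‖gaussW d x‖ = Real.exp (-(π * ‖x‖^2)) := by
  have h : (-(π * ‖x‖ ^ 2 : ℝ) : ℂ) = ((-(π * ‖x‖^2) : ℝ) : ℂ) := by push_cast; ring
  rw [gaussW, h, Complex.norm_exp, Complex.ofReal_re]

lemma gauss_bound (n : ℕ) : ∃ C, 0 ≤ C ∧ ∀ i ≤ n, ∀ x : Ed d,
    ‖iteratedFDeriv ℝ i (gaussW d) x‖ ≤ C * (1 + ‖x‖)^i * Real.exp (-(π * ‖x‖^2)) := by
  induction n with
  | zero =>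
    refine ⟨1, zero_le_one, ?_⟩
    intro i hi x
    interval_cases i
    rw [norm_iteratedFDeriv_zero, norm_gaussW]
    simp
  | succ n ih =>
    obtain ⟨C, hC0, hC⟩ := ih
    refine ⟨C + (n+1) * 2^n * C * (‖TT d‖ + 1), by positivity, ?_⟩
    intro i hi x
    have hx1 : (1:ℝ) ≤ 1 + ‖x‖ := by nlinarith [norm_nonneg x]
    have hE := Real.exp_pos (-(π * ‖x‖^2))
    by_cases h : i ≤ n
    · refine (hC i h x).trans ?_
      have h3 : (0:ℝ) ≤ (n+1) * 2^n * C * (‖TT d‖ + 1) := by positivity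
      have h2 : (0:ℝ) < (1 + ‖x‖)^i := by positivity
      nlinarith [mul_pos h2 hE]
    · have hi' : i = n + 1 := by omega
      subst hi'
      rw [← norm_iteratedFDeriv_fderiv, gauss_fderiv]
      have hsmul := norm_iteratedFDeriv_smul_le (𝕜 := ℝ)
        (f := gaussW d) (g := fun y => TT d y) (N := ((⊤:ℕ∞) : WithTop ℕ∞))
        gauss_contDiff (TT d).contDiff x (n := n) (by exact_mod_cast le_top)
      refine hsmul.trans ?_
      have hterm : ∀ j ∈ Finset.range (n+1),
          (n.choose j : ℝ) * ‖iteratedFDeriv ℝ j (gaussW d) x‖ *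
            ‖iteratedFDeriv ℝ (n - j) (fun y => TT d y) x‖ ≤
          (2^n * C * (‖TT d‖ + 1)) * (1 + ‖x‖)^(n+1) * Real.exp (-(π * ‖x‖^2)) := by
        intro j hj
        have hj' : j ≤ n := Nat.lt_succ_iff.mp (Finset.mem_range.mp hj)
        have hp : (1+‖x‖)^j ≤ (1+‖x‖)^n := by
          exact pow_le_pow_right₀ hx1 hj'
        have h1' : ‖iteratedFDeriv ℝ j (gaussW d) x‖ ≤ C * (1+‖x‖)^n * Real.exp (-(π * ‖x‖^2)) :=
          (hC j hj' x).trans (mul_le_mul_of_nonneg_right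
            (mul_le_mul_of_nonneg_left hp hC0) hE.le)
        have h2' : ‖iteratedFDeriv ℝ (n - j) (fun y => TT d y) x‖ ≤ (‖TT d‖+1) * (1+‖x‖) := by
          refine (clm_bound (TT d) (n-j) x).trans ?_
          nlinarith [norm_nonneg (TT d), norm_nonneg x]
        have hch : (n.choose j : ℝ) ≤ 2^n := by
          have h := Finset.single_le_sum (f := fun m => n.choose m)
            (fun _ _ => Nat.zero_le _) (Finset.mem_range.mpr (Nat.lt_succ_of_le hj'))
          rw [Nat.sum_range_choose] at h
          exact_mod_cast h
        calc (n.choose j : ℝ) * ‖iteratedFDeriv ℝ j (gaussW d) x‖ *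
            ‖iteratedFDeriv ℝ (n - j) (fun y => TT d y) x‖
            ≤ (2^n) * (C * (1+‖x‖)^n * Real.exp (-(π * ‖x‖^2))) * ((‖TT d‖+1) * (1+‖x‖)) :=
              mul_le_mul (mul_le_mul hch h1' (norm_nonneg _) (by positivity)) h2'
                (norm_nonneg _) (by positivity)
        _ = (2^n * C * (‖TT d‖ + 1)) * (1 + ‖x‖)^(n+1) * Real.exp (-(π * ‖x‖^2)) := by ring
      calc _ ≤ ∑ j ∈ Finset.range (n+1),
            (2^n * C * (‖TT d‖ + 1)) * (1 + ‖x‖)^(n+1) * Real.exp (-(π * ‖x‖^2)) :=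
            Finset.sum_le_sum hterm
      _ = (n+1) * ((2^n * C * (‖TT d‖ + 1)) * (1 + ‖x‖)^(n+1) * Real.exp (-(π * ‖x‖^2))) := by
            rw [Finset.sum_const, Finset.card_range]; ring
      _ ≤ (C + (n+1) * 2^n * C * (‖TT d‖ + 1)) * (1 + ‖x‖)^(n+1) * Real.exp (-(π * ‖x‖^2)) := by
            have h2 : (0:ℝ) < (1 + ‖x‖)^(n+1) := by positivity
            nlinarith [mul_pos h2 hE]
lemma integrable_inv_pow (d : ℕ) :
    Integrable (fun x : Ed d => ((1+‖x‖)^(d+1:ℕ))⁻¹) := by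
  have h := integrable_one_add_norm (E := Ed d) (μ := volume) (r := (d+1:ℝ))
    (by rw [finrank_euclideanSpace_fin]; exact_mod_cast lt_add_one d)
  have he : ∀ x : Ed d, ((1+‖x‖)^(d+1:ℕ))⁻¹ = (1+‖x‖) ^ (-(d+1:ℝ)) := by
    intro x
    rw [Real.rpow_neg (by positivity)]
    congr 1
    rw [← Real.rpow_natCast (1+‖x‖) (d+1)]
    norm_num
  simpa [he] using h

lemma div_helper {a b C : ℝ} (hb : 0 < b) (h : b * a ≤ C) : a ≤ C * b⁻¹ := by
  have h2 : a * b ≤ C := by linarith [h, mul_comm a b]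
  have := (le_div_iff₀ hb).mpr h2
  rwa [div_eq_mul_inv] at this

lemma one_add_pow_le (m : ℕ) (a : ℝ) (ha : 0 ≤ a) : (1+a)^m ≤ 2^m * (1 + a^m) := by
  rcases le_total a 1 with h|h
  · have h1 : (1+a)^m ≤ 2^m := pow_le_pow_left₀ (by positivity) (by linarith) m
    nlinarith [pow_nonneg ha m, pow_pos (show (0:ℝ)<2 by norm_num) m]
  · have h1 : (1+a)^m ≤ (2*a)^m := pow_le_pow_left₀ (by positivity) (by linarith) m
    rw [mul_pow] at h1
    nlinarith [pow_pos (show (0:ℝ)<2 by norm_num) m]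

lemma keyDecay (d : ℕ) (σ : Ed d → ℂ) (hσ : ContDiff ℝ (d + 1) σ)
    (hbd : ∀ i : ℕ, i ≤ d + 1 → ∃ C, ∀ x, ‖iteratedFDeriv ℝ i σ x‖ ≤ C)
    (ψ : Ed d → ℂ) (hψ : ContDiff ℝ ((⊤:ℕ∞) : WithTop ℕ∞) ψ)
    (hdec : ∃ C, 0 ≤ C ∧ ∀ n ≤ d+1, ∀ x : Ed d,
      ‖iteratedFDeriv ℝ n ψ x‖ ≤ C * ((1+‖x‖)^(d+1:ℕ))⁻¹) :
    ∃ C, 0 ≤ C ∧ ∀ (v ω : Ed d),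
      ‖𝓕 (fun t => σ t * ψ (t - v)) ω‖ ≤ C * ((1+‖ω‖)^(d+1:ℕ))⁻¹ := by
  obtain ⟨Cψ, hCψ0, hCψ⟩ := hdec
  have hbd' : ∀ i : ℕ, ∃ C, 0 ≤ C ∧ (i ≤ d+1 → ∀ x, ‖iteratedFDeriv ℝ i σ x‖ ≤ C) := by
    intro i; by_cases hi : i ≤ d+1
    · obtain ⟨C, hC⟩ := hbd i hi
      exact ⟨C, (norm_nonneg _).trans (hC 0), fun _ => hC⟩
    · exact ⟨0, le_rfl, fun h => absurd h hi⟩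
  choose M hM0 hM using hbd'
  set A : ℕ → ℝ := fun j => ∑ i ∈ Finset.range (j+1), (j.choose i : ℝ) * M i * Cψ with hA
  have hA0 : ∀ j, 0 ≤ A j := by
    intro j; apply Finset.sum_nonneg; intro i _
    exact mul_nonneg (mul_nonneg (Nat.cast_nonneg _) (hM0 i)) hCψ0
  have hψv : ∀ v : Ed d, ContDiff ℝ ((⊤:ℕ∞) : WithTop ℕ∞) (fun t : Ed d => ψ (t - v)) :=
    fun v => hψ.comp (contDiff_id.sub contDiff_const)
  have hσ' : ContDiff ℝ (((d+1:ℕ):ℕ∞) : WithTop ℕ∞) σ := by exact_mod_cast hσ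
  have hfC : ∀ v : Ed d, ContDiff ℝ (((d+1:ℕ):ℕ∞) : WithTop ℕ∞) (fun t => σ t * ψ (t - v)) :=
    fun v => hσ'.mul ((hψv v).of_le (by exact_mod_cast le_top))
  -- pointwise derivative bound
  have hder : ∀ (v : Ed d) (j : ℕ), j ≤ d+1 → ∀ t : Ed d,
      ‖iteratedFDeriv ℝ j (fun t => σ t * ψ (t - v)) t‖
        ≤ A j * ((1+‖t - v‖)^(d+1:ℕ))⁻¹ := by
    intro v j hj t
    have hmul := norm_iteratedFDeriv_mul_le (𝕜 := ℝ) (f := σ) (g := fun t => ψ (t - v))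
      (N := (((d+1:ℕ):ℕ∞) : WithTop ℕ∞)) hσ' ((hψv v).of_le (by exact_mod_cast le_top)) t
      (n := j) (by exact_mod_cast hj)
    refine hmul.trans ?_
    have hterm : ∀ i ∈ Finset.range (j+1),
        (j.choose i : ℝ) * ‖iteratedFDeriv ℝ i σ t‖ *
          ‖iteratedFDeriv ℝ (j - i) (fun t => ψ (t - v)) t‖
        ≤ (j.choose i : ℝ) * M i * Cψ * ((1+‖t - v‖)^(d+1:ℕ))⁻¹ := by
      intro i hi
      have hi' : i ≤ j := Nat.lt_succ_iff.mp (Finset.mem_range.mp hi)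
      have h1 : ‖iteratedFDeriv ℝ i σ t‖ ≤ M i := hM i (hi'.trans hj) t
      have h2 : ‖iteratedFDeriv ℝ (j - i) (fun t => ψ (t - v)) t‖
          ≤ Cψ * ((1+‖t - v‖)^(d+1:ℕ))⁻¹ := by
        rw [norm_comp_sub v (j - i) ψ hψ t]
        exact hCψ (j - i) (le_trans (Nat.sub_le j i) hj) (t - v)
      have h12 := mul_le_mul h1 h2 (norm_nonneg _) (hM0 i)
      calc (j.choose i : ℝ) * ‖iteratedFDeriv ℝ i σ t‖ *
          ‖iteratedFDeriv ℝ (j - i) (fun t => ψ (t - v)) t‖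
          = (j.choose i : ℝ) * (‖iteratedFDeriv ℝ i σ t‖ *
            ‖iteratedFDeriv ℝ (j - i) (fun t => ψ (t - v)) t‖) := by ring
        _ ≤ (j.choose i : ℝ) * (M i * (Cψ * ((1+‖t - v‖)^(d+1:ℕ))⁻¹)) :=
            mul_le_mul_of_nonneg_left h12 (Nat.cast_nonneg _)
        _ = (j.choose i : ℝ) * M i * Cψ * ((1+‖t - v‖)^(d+1:ℕ))⁻¹ := by ring
    refine (Finset.sum_le_sum hterm).trans ?_
    rw [hA, ← Finset.sum_mul]
  -- integrability of derivatives
  have hint : ∀ (v : Ed d) (j : ℕ), j ≤ d+1 →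
      Integrable (fun t : Ed d => ‖iteratedFDeriv ℝ j (fun t => σ t * ψ (t - v)) t‖) := by
    intro v j hj
    have hcont : Continuous (iteratedFDeriv ℝ j (fun t => σ t * ψ (t - v))) :=
      (hfC v).continuous_iteratedFDeriv (by exact_mod_cast hj)
    refine Integrable.mono' (g := fun t : Ed d => A j * ((1+‖t - v‖)^(d+1:ℕ))⁻¹)
      (((integrable_inv_pow d).comp_sub_right v).const_mul _)
      hcont.norm.aestronglyMeasurable (ae_of_all _ (fun t => ?_))
    simpa using hder v j hj t
  set I0 : ℝ := ∫ x : Ed d, ((1+‖x‖)^(d+1:ℕ))⁻¹ with hI0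
  have hI00 : 0 ≤ I0 := integral_nonneg (fun x => by positivity)
  have hIB : ∀ (v : Ed d) (j : ℕ), j ≤ d+1 →
      (∫ t : Ed d, ‖iteratedFDeriv ℝ j (fun t => σ t * ψ (t - v)) t‖) ≤ A j * I0 := by
    intro v j hj
    have h1 : (∫ t : Ed d, ‖iteratedFDeriv ℝ j (fun t => σ t * ψ (t - v)) t‖)
        ≤ ∫ t : Ed d, A j * ((1+‖t - v‖)^(d+1:ℕ))⁻¹ := by
      refine integral_mono (hint v j hj)
        (((integrable_inv_pow d).comp_sub_right v).const_mul _) (hder v j hj)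
    refine h1.trans (le_of_eq ?_)
    rw [integral_const_mul]
    congr 1
    exact integral_sub_right_eq_self (fun x : Ed d => ((1+‖x‖)^(d+1:ℕ))⁻¹) v
  -- Fourier bounds
  set S : ℝ := ∑ j ∈ Finset.range (d+2), A j * I0 with hS
  have hS0 : 0 ≤ S := Finset.sum_nonneg fun j _ => mul_nonneg (hA0 j) hI00
  refine ⟨2^(d+1) * (A 0 * I0 + (2:ℝ)^(d+1) * S),
    mul_nonneg (by positivity) (add_nonneg (mul_nonneg (hA0 0) hI00)
      (mul_nonneg (by positivity) hS0)), ?_⟩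
  intro v ω
  have h'f : ∀ (k n : ℕ), (k:ℕ∞) ≤ 0 → (n:ℕ∞) ≤ ((d+1:ℕ):ℕ∞) →
      Integrable (fun t : Ed d => ‖t‖^k * ‖iteratedFDeriv ℝ n (fun t => σ t * ψ (t - v)) t‖) := by
    intro k n hk hn
    have hk0 : k = 0 := by exact_mod_cast le_antisymm hk zero_le
    subst hk0
    simpa using hint v n (by exact_mod_cast hn)
  have key := Real.pow_mul_norm_iteratedFDeriv_fourier_le (K := 0) (N := ((d+1:ℕ):ℕ∞))
    (f := fun t => σ t * ψ (t - v)) (by exact_mod_cast hfC v) h'f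
    (k := 0) (n := d+1) (by exact_mod_cast le_rfl) (by exact_mod_cast le_rfl) ω
  rw [norm_iteratedFDeriv_zero] at key
  -- bound the sum in key
  have hsum : (∑ p ∈ Finset.range (0+1) ×ˢ Finset.range (d+1+1),
      ∫ t : Ed d, ‖t‖ ^ p.1 * ‖iteratedFDeriv ℝ p.2 (fun t => σ t * ψ (t - v)) t‖) ≤ S := by
    rw [Finset.sum_product, Finset.sum_range_one]
    rw [hS]
    refine Finset.sum_le_sum ?_
    intro j hj
    have hj' : j ≤ d + 1 := by
      have := Finset.mem_range.mp hj; omega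
    refine le_trans (le_of_eq ?_) (hIB v j hj')
    simp
  have key2 : ‖ω‖^(d+1) * ‖𝓕 (fun t => σ t * ψ (t - v)) ω‖ ≤ 2^(d+1) * S := by
    refine key.trans ?_
    have : ((2:ℝ) * π)^0 * (2*(0:ℕ) + 2)^(d+1) = 2^(d+1) := by norm_num
    rw [this]
    exact mul_le_mul_of_nonneg_left hsum (by positivity)
  have key0 : ‖𝓕 (fun t => σ t * ψ (t - v)) ω‖ ≤ A 0 * I0 := by
    have h1 : ‖𝓕 (fun t => σ t * ψ (t - v)) ω‖
        ≤ ∫ t : Ed d, ‖σ t * ψ (t - v)‖ :=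
      VectorFourier.norm_fourierIntegral_le_integral_norm _ _ _ _ _
    refine h1.trans ?_
    have h2 := hIB v 0 (by omega)
    simpa [norm_iteratedFDeriv_zero] using h2
  -- combine
  have hX : (0:ℝ) ≤ ‖𝓕 (fun t => σ t * ψ (t - v)) ω‖ := norm_nonneg _
  have hb : (0:ℝ) < (1+‖ω‖)^(d+1:ℕ) := by positivity
  refine div_helper hb ?_
  have h3 : (1+‖ω‖)^(d+1:ℕ) ≤ 2^(d+1) * (1 + ‖ω‖^(d+1)) := one_add_pow_le (d+1) ‖ω‖ (norm_nonneg _)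
  calc (1+‖ω‖)^(d+1:ℕ) * ‖𝓕 (fun t => σ t * ψ (t - v)) ω‖
      ≤ (2^(d+1) * (1 + ‖ω‖^(d+1))) * ‖𝓕 (fun t => σ t * ψ (t - v)) ω‖ :=
        mul_le_mul_of_nonneg_right h3 hX
    _ = 2^(d+1) * (‖𝓕 (fun t => σ t * ψ (t - v)) ω‖
          + ‖ω‖^(d+1) * ‖𝓕 (fun t => σ t * ψ (t - v)) ω‖) := by ring
    _ ≤ 2^(d+1) * (A 0 * I0 + 2^(d+1) * S) := by
        refine mul_le_mul_of_nonneg_left (add_le_add key0 key2) (by positivity)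
lemma poly_exp_le (m : ℕ) (t : ℝ) (ht : 0 ≤ t) :
    (1+t)^m * Real.exp (-(π * t^2)) ≤ Real.exp ((m:ℝ)^2/(4*π)) := by
  have h1 : (1+t)^m ≤ Real.exp ((m:ℝ) * t) := by
    calc (1+t)^m ≤ (Real.exp t)^m :=
      pow_le_pow_left₀ (by positivity) (by linarith [Real.add_one_le_exp t]) m
    _ = Real.exp ((m:ℝ) * t) := by rw [← Real.exp_nat_mul]
  calc (1+t)^m * Real.exp (-(π * t^2)) ≤ Real.exp ((m:ℝ)*t) * Real.exp (-(π*t^2)) :=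
        mul_le_mul_of_nonneg_right h1 (Real.exp_pos _).le
  _ = Real.exp ((m:ℝ)*t - π*t^2) := by rw [← Real.exp_add]; ring_nf
  _ ≤ Real.exp ((m:ℝ)^2/(4*π)) := by
      rw [Real.exp_le_exp, le_div_iff₀ (by positivity)]
      nlinarith [sq_nonneg ((m:ℝ) - 2*π*t), pi_pos]

lemma gauss_decay (d : ℕ) : ∃ C, 0 ≤ C ∧ ∀ n ≤ d+1, ∀ x : Ed d,
    ‖iteratedFDeriv ℝ n (gaussW d) x‖ ≤ C * ((1+‖x‖)^(d+1:ℕ))⁻¹ := by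
  obtain ⟨C, hC0, hC⟩ := gauss_bound (d := d) (d+1)
  refine ⟨C * Real.exp (((2*d+2:ℕ):ℝ)^2/(4*π)), by positivity, ?_⟩
  intro n hn x
  refine (hC n hn x).trans ?_
  refine div_helper (by positivity) ?_
  have hx1 : (1:ℝ) ≤ 1 + ‖x‖ := by nlinarith [norm_nonneg x]
  have h2 : (1+‖x‖)^(d+1+n) ≤ (1+‖x‖)^(2*d+2) := pow_le_pow_right₀ hx1 (by omega)
  have h3 := poly_exp_le (2*d+2) ‖x‖ (norm_nonneg x)
  calc (1+‖x‖)^(d+1:ℕ) * (C * (1+‖x‖)^n * Real.exp (-(π*‖x‖^2)))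
      = C * ((1+‖x‖)^(d+1+n) * Real.exp (-(π*‖x‖^2))) := by rw [pow_add]; ring
  _ ≤ C * ((1+‖x‖)^(2*d+2) * Real.exp (-(π*‖x‖^2))) := by
      refine mul_le_mul_of_nonneg_left (mul_le_mul_of_nonneg_right h2 (Real.exp_pos _).le) hC0
  _ ≤ C * Real.exp (((2*d+2:ℕ):ℝ)^2/(4*π)) := by
      refine mul_le_mul_of_nonneg_left ?_ hC0
      exact_mod_cast h3

lemma schwartz_decay (χ : 𝓢(Ed d, ℂ)) : ∃ C, 0 ≤ C ∧ ∀ n ≤ d+1, ∀ x : Ed d,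
    ‖iteratedFDeriv ℝ n (⇑χ) x‖ ≤ C * ((1+‖x‖)^(d+1:ℕ))⁻¹ := by
  set c : ℝ := 2 ^ (d+1) *
    ((Finset.Iic ((d+1), (d+1))).sup (fun m => SchwartzMap.seminorm ℝ m.1 m.2)) χ with hc
  have hc0 : 0 ≤ c := by
    apply mul_nonneg (by positivity)
    exact apply_nonneg _ _
  refine ⟨c, hc0, ?_⟩
  intro n hn x
  refine div_helper (by positivity) ?_
  exact SchwartzMap.one_add_le_sup_seminorm_apply (𝕜 := ℝ) (m := ((d+1), (d+1))) le_rfl hn χ x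

lemma stft_eq (σ : Ed d → ℂ) (x ω : Ed d) :
    stft (gaussW d) σ x ω = 𝓕 (fun t => σ t * gaussW d (t - x)) ω := by
  rw [stft, Real.fourier_eq']
  congr 1
  funext t
  have hg : (starRingEnd ℂ) (gaussW d (t - x)) = gaussW d (t - x) := by
    rw [gaussW, ← Complex.exp_conj]
    congr 1
    simp
  rw [hg, smul_eq_mul, real_inner_comm t ω]
  ring_nf
end Stmt8
end

open Stmt8

/-- a C^{d+1} function with all derivatives up to order d+1 bounded lies in
M^{∞,1}(ℝ^d), and hence in W(𝓕L¹, ℓ^∞)(ℝ^d). -/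
theorem statement8 (d : ℕ) (hd : 1 ≤ d) (σ : Ed d → ℂ)
    (hσ : ContDiff ℝ (d + 1) σ)
    (hbd : ∀ i : ℕ, i ≤ d + 1 → ∃ C, ∀ x, ‖iteratedFDeriv ℝ i σ x‖ ≤ C) :
    modNorm d ⊤ 1 0 σ < ⊤ ∧
    ∀ β : ℝ, 0 < β → ∀ χ : 𝓢(Ed d, ℂ), HasCompactSupport (𝓕 ⇑χ) →
      wienerNorm d 1 β ⇑χ σ < ⊤ := by
  constructor
  · obtain ⟨C, hC0, hC⟩ := keyDecay d σ hσ hbd (gaussW d) gauss_contDiff (gauss_decay d)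
    have hstft : ∀ x ω : Ed d, ‖stft (gaussW d) σ x ω‖ ≤ C * ((1+‖ω‖)^(d+1:ℕ))⁻¹ := by
      intro x ω; rw [stft_eq]; exact hC x ω
    have hF : ∀ ω : Ed d,
        (eLpNorm (fun x : Ed d => stft (gaussW d) σ x ω) ⊤ volume).toReal * jb ω ^ (0:ℝ)
          ≤ C * ((1+‖ω‖)^(d+1:ℕ))⁻¹ := by
      intro ω
      rw [Real.rpow_zero, mul_one]
      refine ENNReal.toReal_le_of_le_ofReal (by positivity) ?_
      rw [eLpNorm_exponent_top]
      exact eLpNormEssSup_le_of_ae_bound (ae_of_all _ (fun x => hstft x ω))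
    rw [modNorm, eLpNorm_one_eq_lintegral_enorm]
    have hle : (∫⁻ ω : Ed d, ‖(eLpNorm (fun x : Ed d => stft (gaussW d) σ x ω) ⊤ volume).toReal
          * jb ω ^ (0:ℝ)‖₊ ∂volume)
        ≤ ∫⁻ ω : Ed d, ENNReal.ofReal (C * ((1+‖ω‖)^(d+1:ℕ))⁻¹) ∂volume := by
      refine lintegral_mono (fun ω => ?_)
      rw [← enorm_eq_nnnorm, ← ofReal_norm]
      refine ENNReal.ofReal_le_ofReal ?_
      refine le_trans (le_of_eq (norm_of_nonneg ?_)) (hF ω)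
      have : (0:ℝ) ≤ jb ω ^ (0:ℝ) := by rw [Real.rpow_zero]; norm_num
      exact mul_nonneg ENNReal.toReal_nonneg this
    exact lt_of_le_of_lt hle ((integrable_inv_pow d).const_mul C).lintegral_lt_top
  · intro β hβ χ hχ
    obtain ⟨C, hC0, hC⟩ := keyDecay d σ hσ hbd ⇑χ (by exact_mod_cast χ.smooth ⊤) (schwartz_decay χ)
    rw [wienerNorm]
    have hfin : (∫⁻ x : Ed d, ENNReal.ofReal (C * ((1+‖x‖)^(d+1:ℕ))⁻¹) ∂volume) < ⊤ :=
      ((integrable_inv_pow d).const_mul C).lintegral_lt_top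
    refine lt_of_le_of_lt (iSup_le (fun n => ?_)) hfin
    rw [eLpNorm_one_eq_lintegral_enorm]
    refine lintegral_mono (fun ξ => ?_)
    rw [← ofReal_norm]
    refine ENNReal.ofReal_le_ofReal ?_
    rw [Real.fourierInv_eq_fourier_neg]
    refine le_trans (hC _ (-ξ)) ?_
    rw [norm_neg]
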